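/- If T is a positive semidefinite matrix, A is a matrix with operator norm ‖A‖ ≤ 1, and TA = A†T with TA ≥ 0 (positive semidefinite), then TA ≤ T in the Loewner order. -/

import Mathlib

open Matrix BigOperators
open scoped ComplexOrder Classical

noncomputable def msqrt {n : Type*} [Fintype n] [DecidableEq n]
    (A : Matrix n n ℂ) : Matrix n n ℂ :=
  if h : A.PosSemidef then
    (h.1.eigenvectorUnitary : Matrix n n ℂ) * diagonal ((↑) ∘ (√·) ∘ h.1.eigenvalues) *
      (star h.1.eigenvectorUnitary : Matrix n n ℂ)
  else 0

noncomputable def gm {n : Type*} [Fintype n] [DecidableEq n]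
    (A B : Matrix n n ℂ) : Matrix n n ℂ :=
  msqrt A * msqrt ((msqrt A)⁻¹ * B * (msqrt A)⁻¹) * msqrt A

def IsDensity {n : Type*} [Fintype n] (ρ : Matrix n n ℂ) : Prop :=
  ρ.PosSemidef ∧ ρ.trace = 1

structure IsReverseTest {d m : ℕ} (ρ σ : Matrix (Fin d) (Fin d) ℂ)
    (R : Fin m → Matrix (Fin d) (Fin d) ℂ) (p q : Fin m → ℝ) : Prop where
  states : ∀ x, IsDensity (R x)
  p_nonneg : ∀ x, 0 ≤ p x
  q_nonneg : ∀ x, 0 ≤ q x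
  p_sum : ∑ x, p x = 1
  q_sum : ∑ x, q x = 1
  rho_eq : ∑ x, (p x : ℂ) • R x = ρ
  sigma_eq : ∑ x, (q x : ℂ) • R x = σ

noncomputable def Fmin {d : ℕ} (ρ σ : Matrix (Fin d) (Fin d) ℂ) : ℝ :=
  sSup {r : ℝ | ∃ (m : ℕ) (R : Fin m → Matrix (Fin d) (Fin d) ℂ) (p q : Fin m → ℝ),
    IsReverseTest ρ σ R p q ∧ r = ∑ x, Real.sqrt (p x * q x)}

noncomputable def Dmax {d : ℕ} (ρ σ : Matrix (Fin d) (Fin d) ℂ) : ℝ :=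
  sInf {r : ℝ | ∃ (m : ℕ) (R : Fin m → Matrix (Fin d) (Fin d) ℂ) (p q : Fin m → ℝ),
    IsReverseTest ρ σ R p q ∧ r = (∑ x, |p x - q x|) / 2}

noncomputable def choiMatrix {d e : ℕ}
    (Λ : Matrix (Fin d) (Fin d) ℂ →ₗ[ℂ] Matrix (Fin e) (Fin e) ℂ) :
    Matrix (Fin d × Fin e) (Fin d × Fin e) ℂ :=
  Matrix.of fun pr qr => Λ (Matrix.single pr.1 qr.1 1) pr.2 qr.2

def IsCPTP {d e : ℕ}
    (Λ : Matrix (Fin d) (Fin d) ℂ →ₗ[ℂ] Matrix (Fin e) (Fin e) ℂ) : Prop :=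
  (choiMatrix Λ).PosSemidef ∧ ∀ A, (Λ A).trace = A.trace

noncomputable def mcfc {n : Type*} [Fintype n] [DecidableEq n]
    (f : ℝ → ℝ) (A : Matrix n n ℂ) : Matrix n n ℂ :=
  if h : A.IsHermitian then h.cfc f else 0

def IsOperatorMonotoneOnNonneg (f : ℝ → ℝ) : Prop :=
  ∀ (d : ℕ) (A B : Matrix (Fin d) (Fin d) ℂ), A.PosSemidef → B.PosSemidef →
    (B - A).PosSemidef → (mcfc f B - mcfc f A).PosSemidef

noncomputable def traceNorm {n : Type*} [Fintype n] [DecidableEq n]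
    (A : Matrix n n ℂ) : ℝ :=
  ((msqrt (Aᴴ * A)).trace).re

set_option synthInstance.maxHeartbeats 1000000
set_option maxHeartbeats 1000000

lemma aux_one_sub_psd {d : ℕ} (A : Matrix (Fin d) (Fin d) ℂ)
    (hA : ‖Matrix.toEuclideanCLM (𝕜 := ℂ) A‖ ≤ 1) :
    (1 - A * Aᴴ).PosSemidef := by
  have hstar : Matrix.toEuclideanCLM (𝕜 := ℂ) Aᴴ = star (Matrix.toEuclideanCLM (𝕜 := ℂ) A) := by
    rw [← map_star]; rfl
  have hAH : ‖Matrix.toEuclideanCLM (𝕜 := ℂ) Aᴴ‖ ≤ 1 := by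
    rw [hstar, ContinuousLinearMap.star_eq_adjoint]
    exact le_of_eq_of_le (ContinuousLinearMap.adjoint.norm_map _) hA
  refine Matrix.PosSemidef.of_dotProduct_mulVec_nonneg ?_ ?_
  · exact (Matrix.isHermitian_one).sub (Matrix.posSemidef_self_mul_conjTranspose A).1
  · intro x
    have key : star x ⬝ᵥ (A * Aᴴ) *ᵥ x = star (Aᴴ *ᵥ x) ⬝ᵥ (Aᴴ *ᵥ x) := by
      rw [← Matrix.mulVec_mulVec, Matrix.dotProduct_mulVec, Matrix.star_mulVec,
        Matrix.conjTranspose_conjTranspose]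
    have hx' : star x ⬝ᵥ (1 - A * Aᴴ) *ᵥ x
        = star x ⬝ᵥ x - star (Aᴴ *ᵥ x) ⬝ᵥ (Aᴴ *ᵥ x) := by
      rw [Matrix.sub_mulVec, dotProduct_sub, Matrix.one_mulVec, key]
    rw [hx']
    set X : EuclideanSpace ℂ (Fin d) := (WithLp.equiv 2 _).symm x with hX
    have hmap : Matrix.toEuclideanCLM (𝕜 := ℂ) Aᴴ X = (WithLp.equiv 2 _).symm (Aᴴ *ᵥ x) :=
      Matrix.toEuclideanCLM_toLp Aᴴ x
    have hnorm : ‖Matrix.toEuclideanCLM (𝕜 := ℂ) Aᴴ X‖ ≤ ‖X‖ := by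
      calc ‖Matrix.toEuclideanCLM (𝕜 := ℂ) Aᴴ X‖ ≤ 1 * ‖X‖ :=
        (Matrix.toEuclideanCLM (𝕜 := ℂ) Aᴴ).le_of_opNorm_le hAH X
      _ = ‖X‖ := one_mul _
    have e1 : star x ⬝ᵥ x = ((‖X‖ ^ 2 : ℝ) : ℂ) := by
      have h1 := inner_self_eq_norm_sq_to_K (𝕜 := ℂ) X
      have h2 := EuclideanSpace.inner_eq_star_dotProduct X X
      simp only [hX, Equiv.apply_symm_apply] at h2
      rw [h1] at h2
      rw [hX]
      rw [dotProduct_comm]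
      exact_mod_cast h2.symm
    have e2 : star (Aᴴ *ᵥ x) ⬝ᵥ (Aᴴ *ᵥ x)
        = ((‖Matrix.toEuclideanCLM (𝕜 := ℂ) Aᴴ X‖ ^ 2 : ℝ) : ℂ) := by
      have h1 := inner_self_eq_norm_sq_to_K (𝕜 := ℂ) (Matrix.toEuclideanCLM (𝕜 := ℂ) Aᴴ X)
      have h2 := EuclideanSpace.inner_eq_star_dotProduct
        ((WithLp.equiv 2 (Fin d → ℂ)).symm (Aᴴ *ᵥ x)) ((WithLp.equiv 2 (Fin d → ℂ)).symm (Aᴴ *ᵥ x))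
      rw [← hmap, h1] at h2
      rw [dotProduct_comm]
      exact_mod_cast h2.symm
    rw [e1, e2, ← Complex.ofReal_sub, Complex.zero_le_real]
    have := pow_le_pow_left₀ (norm_nonneg _) hnorm 2
    linarith

lemma aux_sq_mono {d : ℕ} {X Y : Matrix (Fin d) (Fin d) ℂ} (hX : X.PosSemidef)
    (hY : Y.PosSemidef) (h : (Y * Y - X * X).PosSemidef) : (Y - X).PosSemidef := by
  have hH : (Y - X).IsHermitian := hY.1.sub hX.1
  apply (Matrix.IsHermitian.posSemidef_iff_eigenvalues_nonneg hH).mpr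
  intro i
  by_contra hneg
  push_neg at hneg
  rw [Pi.zero_apply] at hneg
  set t : ℝ := hH.eigenvalues i with ht
  set v : Fin d → ℂ := ⇑(hH.eigenvectorBasis i) with hv
  have hvne : hH.eigenvectorBasis i ≠ 0 := hH.eigenvectorBasis.orthonormal.ne_zero i
  have hv0 : v ≠ 0 := by
    intro hc
    exact hvne (by ext j; exact congrFun hc j)
  have heig : (Y - X) *ᵥ v = (t : ℂ) • v := by
    have h' := hH.mulVec_eigenvectorBasis i
    rw [← hv, ← ht] at h'
    rw [h']
    ext j
    simp [Complex.real_smul]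
  set a : ℂ := star v ⬝ᵥ Y *ᵥ v with ha
  set b : ℂ := star v ⬝ᵥ X *ᵥ v with hb
  have ha0 : 0 ≤ a := hY.dotProduct_mulVec_nonneg v
  have hb0 : 0 ≤ b := hX.dotProduct_mulVec_nonneg v
  have hsplit : star v ⬝ᵥ (Y * Y - X * X) *ᵥ v = (t : ℂ) * (a + b) := by
    have hdecomp : Y * Y - X * X = Y * (Y - X) + (Y - X) * X := by noncomm_ring
    have h1 : star v ⬝ᵥ (Y * (Y - X)) *ᵥ v = (t : ℂ) * a := by
      rw [← Matrix.mulVec_mulVec, heig, Matrix.mulVec_smul, dotProduct_smul]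
      rw [smul_eq_mul]
    have h2 : star v ⬝ᵥ ((Y - X) * X) *ᵥ v = (t : ℂ) * b := by
      rw [← Matrix.mulVec_mulVec, Matrix.dotProduct_mulVec]
      have hvm : star v ᵥ* (Y - X) = (t : ℂ) • star v := by
        have h3 : star v ᵥ* (Y - X) = star ((Y - X) *ᵥ v) := by
          rw [Matrix.star_mulVec, hH.eq]
        rw [h3, heig, star_smul]
        congr 1
        simp [Complex.star_def, Complex.conj_ofReal]
      rw [hvm, smul_dotProduct, smul_eq_mul]
    rw [hdecomp, Matrix.add_mulVec, dotProduct_add, h1, h2]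
    ring
  have hge : 0 ≤ (t : ℂ) * (a + b) := hsplit ▸ h.dotProduct_mulVec_nonneg v
  have hab0 : 0 ≤ a + b := add_nonneg ha0 hb0
  obtain ⟨hre0, him0⟩ := Complex.le_def.mp hab0
  simp only [Complex.zero_re, Complex.zero_im] at hre0 him0
  have habre : a + b = (((a + b).re : ℝ) : ℂ) := by
    apply Complex.ext <;> simp [← him0]
  have hzero : a + b = 0 := by
    have hmul : 0 ≤ (t * (a + b).re : ℝ) := by
      rw [habre, ← Complex.ofReal_mul, Complex.zero_le_real] at hge
      exact hge
    have hre0' : (a + b).re = 0 := by nlinarith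
    rw [habre, hre0']; simp
  have haz : a = 0 := le_antisymm (by rw [← hzero]; exact le_add_of_nonneg_right hb0) ha0
  have hbz : b = 0 := le_antisymm (by rw [← hzero]; exact le_add_of_nonneg_left ha0) hb0
  have hYv : Y *ᵥ v = 0 := (hY.dotProduct_mulVec_zero_iff v).mp haz
  have hXv : X *ᵥ v = 0 := (hX.dotProduct_mulVec_zero_iff v).mp hbz
  have hsv : (t : ℂ) • v = 0 := by
    rw [← heig, Matrix.sub_mulVec, hYv, hXv, sub_zero]
  have htne : (t : ℂ) ≠ 0 := by
    simp only [ne_eq, Complex.ofReal_eq_zero]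
    exact ne_of_lt hneg
  exact hv0 (by simpa [htne] using smul_eq_zero.mp hsv)


theorem stmt1 {d : ℕ} (T A : Matrix (Fin d) (Fin d) ℂ)
    (hT : T.PosSemidef) (hA : ‖Matrix.toEuclideanCLM (𝕜 := ℂ) A‖ ≤ 1)
    (hcomm : T * A = Aᴴ * T) (hTA : (T * A).PosSemidef) :
    (T - T * A).PosSemidef := by
  have h1 : (1 - A * Aᴴ).PosSemidef := aux_one_sub_psd A hA
  have h2 : (T * (1 - A * Aᴴ) * Tᴴ).PosSemidef := h1.mul_mul_conjTranspose_same T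
  rw [hT.1.eq] at h2
  have h3 : T * T - (T * A) * (T * A) = T * (1 - A * Aᴴ) * T := by
    conv_lhs => rw [show (T * A) * (T * A) = (T * A) * (Aᴴ * T) from by rw [← hcomm]]
    noncomm_ring
  exact aux_sq_mono hTA hT (by rw [h3]; exact h2)
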